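/- The polynomial $x^4y^2+y^4z^2+z^4x^2-3x^2y^2z^2$ is nonnegative on $\mathbb{R}^3$ but is not a sum of squares of polynomials in $\mathbb{R}[x,y,z]$. -/

import Mathlib

open MvPolynomial

noncomputable def μ (a b c : ℕ) : Fin 3 →₀ ℕ :=
  Finsupp.single 0 a + Finsupp.single 1 b + Finsupp.single 2 c

@[simp] lemma μ_apply0 (a b c : ℕ) : μ a b c 0 = a := by
  simp [μ, Finsupp.single_apply]
@[simp] lemma μ_apply1 (a b c : ℕ) : μ a b c 1 = b := by
  simp [μ, Finsupp.single_apply]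
@[simp] lemma μ_apply2 (a b c : ℕ) : μ a b c 2 = c := by
  simp [μ, Finsupp.single_apply]

lemma eq_μ_iff (n : Fin 3 →₀ ℕ) (a b c : ℕ) :
    n = μ a b c ↔ n 0 = a ∧ n 1 = b ∧ n 2 = c := by
  constructor
  · rintro rfl; simp
  · rintro ⟨h0, h1, h2⟩
    ext j
    fin_cases j <;> simpa

@[simp] lemma μ_eq_iff (a b c d e f : ℕ) :
    μ a b c = μ d e f ↔ a = d ∧ b = e ∧ c = f := by
  rw [eq_μ_iff]; simp

lemma μ_add (a b c d e f : ℕ) : μ a b c + μ d e f = μ (a+d) (b+e) (c+f) := by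
  rw [eq_μ_iff]; simp [Finsupp.add_apply]

lemma hm1 : ((X 0)^4*(X 1)^2 : MvPolynomial (Fin 3) ℝ) = monomial (μ 4 2 0) 1 := by
  have h : (Finsupp.single 0 4 + Finsupp.single 1 2 : Fin 3 →₀ ℕ) = μ 4 2 0 := by
    ext j; fin_cases j <;> simp [μ, Finsupp.single_apply]
  rw [X_pow_eq_monomial, X_pow_eq_monomial, monomial_mul, one_mul, h]
lemma hm2 : ((X 1)^4*(X 2)^2 : MvPolynomial (Fin 3) ℝ) = monomial (μ 0 4 2) 1 := by
  have h : (Finsupp.single 1 4 + Finsupp.single 2 2 : Fin 3 →₀ ℕ) = μ 0 4 2 := by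
    ext j; fin_cases j <;> simp [μ, Finsupp.single_apply]
  rw [X_pow_eq_monomial, X_pow_eq_monomial, monomial_mul, one_mul, h]
lemma hm3 : ((X 2)^4*(X 0)^2 : MvPolynomial (Fin 3) ℝ) = monomial (μ 2 0 4) 1 := by
  have h : (Finsupp.single 2 4 + Finsupp.single 0 2 : Fin 3 →₀ ℕ) = μ 2 0 4 := by
    ext j; fin_cases j <;> simp [μ, Finsupp.single_apply]
  rw [X_pow_eq_monomial, X_pow_eq_monomial, monomial_mul, one_mul, h]
lemma hm4 : (3*(X 0)^2*(X 1)^2*(X 2)^2 : MvPolynomial (Fin 3) ℝ) = monomial (μ 2 2 2) 3 := by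
  have h : (Finsupp.single 0 2 + Finsupp.single 1 2 + Finsupp.single 2 2 : Fin 3 →₀ ℕ)
      = μ 2 2 2 := rfl
  have e : ((X 0)^2*(X 1)^2*(X 2)^2 : MvPolynomial (Fin 3) ℝ) = monomial (μ 2 2 2) 1 := by
    rw [X_pow_eq_monomial, X_pow_eq_monomial, X_pow_eq_monomial, monomial_mul, monomial_mul,
      one_mul, one_mul, h]
  calc (3*(X 0)^2*(X 1)^2*(X 2)^2 : MvPolynomial (Fin 3) ℝ)
      = C 3 * ((X 0)^2*(X 1)^2*(X 2)^2) := by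
        rw [show ((C 3 : MvPolynomial (Fin 3) ℝ)) = 3 from rfl]; ring
    _ = monomial (μ 2 2 2) 3 := by rw [e, C_mul_monomial, mul_one]

lemma coeff_f (n : Fin 3 →₀ ℕ) :
    coeff n ((X 0)^4*(X 1)^2 + (X 1)^4*(X 2)^2 + (X 2)^4*(X 0)^2
      - 3*(X 0)^2*(X 1)^2*(X 2)^2 : MvPolynomial (Fin 3) ℝ) =
    (if μ 4 2 0 = n then 1 else 0) + (if μ 0 4 2 = n then 1 else 0)
      + (if μ 2 0 4 = n then 1 else 0) - (if μ 2 2 2 = n then 3 else 0) := by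
  rw [hm1, hm2, hm3, hm4]
  simp only [coeff_sub, coeff_add, coeff_monomial]

noncomputable def φ (n : Fin 3 →₀ ℕ) : ℕ ×ₗ ℕ ×ₗ ℕ :=
  toLex (n 0 + n 1 + n 2, toLex (n 0, n 1))

lemma φ_le_iff (m n : Fin 3 →₀ ℕ) : φ m ≤ φ n ↔
    (m 0 + m 1 + m 2 < n 0 + n 1 + n 2 ∨
      (m 0 + m 1 + m 2 = n 0 + n 1 + n 2 ∧ (m 0 < n 0 ∨ (m 0 = n 0 ∧ m 1 ≤ n 1)))) := by
  simp [φ, Prod.Lex.le_iff]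

-- the inner antidiagonal sum collapses to a single square
lemma sum_antidiag_eq_sq (q : MvPolynomial (Fin 3) ℝ) (n M : Fin 3 →₀ ℕ) (hM : M + M = n)
    (h : ∀ a b : Fin 3 →₀ ℕ, a + b = n → coeff a q ≠ 0 → coeff b q ≠ 0 → a = M ∧ b = M) :
    ∑ x ∈ Finset.HasAntidiagonal.antidiagonal n, coeff x.1 q * coeff x.2 q = coeff M q ^ 2 := by
  rw [Finset.sum_eq_single (M, M)]
  · exact (sq (coeff M q)).symm
  · intro x hx hne
    rcases eq_or_ne (coeff x.1 q) 0 with h1 | h1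
    · rw [h1, zero_mul]
    rcases eq_or_ne (coeff x.2 q) 0 with h2 | h2
    · rw [h2, mul_zero]
    obtain ⟨e1, e2⟩ := h x.1 x.2 (Finset.HasAntidiagonal.mem_antidiagonal.1 hx) h1 h2
    exact absurd (Prod.ext e1 e2) hne
  · intro hMM
    exact absurd (Finset.HasAntidiagonal.mem_antidiagonal.2 hM) hMM

lemma comp_of_eq {m : Fin 3 →₀ ℕ} {a b c : ℕ} (h : μ a b c = m + m) :
    m 0 + m 0 = a ∧ m 1 + m 1 = b ∧ m 2 + m 2 = c := by
  refine ⟨?_, ?_, ?_⟩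
  · have := DFunLike.congr_fun h 0; simpa [Finsupp.add_apply] using this.symm
  · have := DFunLike.congr_fun h 1; simpa [Finsupp.add_apply] using this.symm
  · have := DFunLike.congr_fun h 2; simpa [Finsupp.add_apply] using this.symm

lemma finsupp_eq_of_comps {a b : Fin 3 →₀ ℕ} (h0 : a 0 = b 0) (h1 : a 1 = b 1)
    (h2 : a 2 = b 2) : a = b := by
  ext j; fin_cases j <;> assumption

lemma comp_of_add {a b n : Fin 3 →₀ ℕ} (h : a + b = n) (j : Fin 3) :
    a j + b j = n j := by
  have := DFunLike.congr_fun h j; simpa [Finsupp.add_apply] using this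

set_option maxHeartbeats 2000000 in
theorem stmt_4 :
    let x : MvPolynomial (Fin 3) ℝ := X 0
    let y : MvPolynomial (Fin 3) ℝ := X 1
    let z : MvPolynomial (Fin 3) ℝ := X 2
    let f := x^4*y^2 + y^4*z^2 + z^4*x^2 - 3*x^2*y^2*z^2
    (∀ v : Fin 3 → ℝ, 0 ≤ eval v f) ∧
      ¬ ∃ (k : ℕ) (p : Fin k → MvPolynomial (Fin 3) ℝ), f = ∑ i, (p i) ^ 2 := by
  intro x y z f
  constructor
  · -- nonnegativity
    intro v
    show (0:ℝ) ≤ eval v ((X 0)^4*(X 1)^2 + (X 1)^4*(X 2)^2 + (X 2)^4*(X 0)^2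
      - 3*(X 0)^2*(X 1)^2*(X 2)^2 : MvPolynomial (Fin 3) ℝ)
    simp only [map_add, map_sub, map_mul, map_pow, eval_X, map_ofNat]
    set a := v 0; set b := v 1; set c := v 2
    have h1 : (0:ℝ) ≤ a^4*b^2 := by positivity
    have h2 : (0:ℝ) ≤ b^4*c^2 := by positivity
    have h3 : (0:ℝ) ≤ c^4*a^2 := by positivity
    have key := Real.geom_mean_le_arith_mean3_weighted (by norm_num : (0:ℝ) ≤ 1/3)
      (by norm_num : (0:ℝ) ≤ 1/3) (by norm_num : (0:ℝ) ≤ 1/3) h1 h2 h3 (by norm_num)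
    have e1 : (a^4*b^2) ^ ((1:ℝ)/3) * (b^4*c^2) ^ ((1:ℝ)/3) * (c^4*a^2) ^ ((1:ℝ)/3)
        = ((a^4*b^2) * (b^4*c^2) * (c^4*a^2)) ^ ((1:ℝ)/3) := by
      rw [← Real.mul_rpow h1 h2, ← Real.mul_rpow (mul_nonneg h1 h2) h3]
    have e2 : ((a^4*b^2) * (b^4*c^2) * (c^4*a^2)) = (a^2*b^2*c^2)^(3:ℕ) := by ring
    have h4 : (0:ℝ) ≤ a^2*b^2*c^2 := by positivity
    have e3 : ((a^2*b^2*c^2)^(3:ℕ)) ^ ((1:ℝ)/3) = a^2*b^2*c^2 := by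
      rw [← Real.rpow_natCast (a^2*b^2*c^2) 3, ← Real.rpow_mul h4]
      norm_num
    rw [e1, e2, e3] at key
    nlinarith [key]
  · -- not a sum of squares
    rintro ⟨k, p, hf⟩
    classical
    have hf' : ((X 0)^4*(X 1)^2 + (X 1)^4*(X 2)^2 + (X 2)^4*(X 0)^2
        - 3*(X 0)^2*(X 1)^2*(X 2)^2 : MvPolynomial (Fin 3) ℝ) = ∑ i, (p i) ^ 2 := hf
    -- coefficients of the sum of squares
    have hco : ∀ n : Fin 3 →₀ ℕ,
        (if μ 4 2 0 = n then (1:ℝ) else 0) + (if μ 0 4 2 = n then 1 else 0)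
          + (if μ 2 0 4 = n then 1 else 0) - (if μ 2 2 2 = n then 3 else 0)
        = ∑ i, ∑ x ∈ Finset.HasAntidiagonal.antidiagonal n, coeff x.1 (p i) * coeff x.2 (p i) := by
      intro n
      rw [← coeff_f n, hf', coeff_sum]
      refine Finset.sum_congr rfl fun i _ => ?_
      rw [sq, coeff_mul]
    -- the union of supports
    set S : Finset (Fin 3 →₀ ℕ) := Finset.univ.biUnion (fun i => (p i).support) with hSdef
    have hmemS : ∀ a : Fin 3 →₀ ℕ, a ∈ S ↔ ∃ i, coeff a (p i) ≠ 0 := by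
      intro a
      simp [hSdef, MvPolynomial.mem_support_iff]
    -- S is nonempty
    have hne : S.Nonempty := by
      rw [Finset.nonempty_iff_ne_empty]
      intro hS0
      have hz : ∀ (i : Fin k) (m : Fin 3 →₀ ℕ), coeff m (p i) = 0 := by
        intro i m
        by_contra h
        have : m ∈ S := (hmemS m).2 ⟨i, h⟩
        simp [hS0] at this
      have h0 := hco (μ 2 2 2)
      simp only [hz, zero_mul, Finset.sum_const_zero] at h0
      simp at h0
    -- max and min elements for φ
    obtain ⟨A, hAS, hAmax⟩ : ∃ A ∈ S, ∀ a ∈ S, φ a ≤ φ A := by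
      obtain ⟨A, hA, hmax⟩ := S.exists_max_image φ hne
      exact ⟨A, hA, hmax⟩
    obtain ⟨B, hBS, hBmin⟩ : ∃ B ∈ S, ∀ a ∈ S, φ B ≤ φ a := by
      obtain ⟨B, hB, hmin⟩ := S.exists_min_image φ hne
      exact ⟨B, hB, hmin⟩
    -- extremal monomials double to monomials of f
    have hdouble : ∀ E : Fin 3 →₀ ℕ, E ∈ S → (∀ a b : Fin 3 →₀ ℕ, a + b = E + E →
        (∃ i, coeff a (p i) ≠ 0) → (∃ j, coeff b (p j) ≠ 0) → a = E ∧ b = E) →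
        (E 0 = 2 ∧ E 1 = 1 ∧ E 2 = 0) ∨ (E 0 = 0 ∧ E 1 = 2 ∧ E 2 = 1) ∨
          (E 0 = 1 ∧ E 1 = 0 ∧ E 2 = 2) ∨ (E 0 = 1 ∧ E 1 = 1 ∧ E 2 = 1) := by
      intro E hES hkey
      have hsum : ∀ i : Fin k, ∑ x ∈ Finset.HasAntidiagonal.antidiagonal (E + E),
          coeff x.1 (p i) * coeff x.2 (p i) = coeff E (p i) ^ 2 := by
        intro i
        refine sum_antidiag_eq_sq (p i) (E + E) E rfl ?_
        intro a b hab ha hb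
        exact hkey a b hab ⟨i, ha⟩ ⟨i, hb⟩
      have hpos : (0:ℝ) < ∑ i, coeff E (p i) ^ 2 := by
        obtain ⟨i0, hi0⟩ := (hmemS E).1 hES
        refine Finset.sum_pos' (fun i _ => sq_nonneg _) ⟨i0, Finset.mem_univ i0, ?_⟩
        positivity
      have h0 := hco (E + E)
      simp only [hsum] at h0
      have hdisj : μ 4 2 0 = E + E ∨ μ 0 4 2 = E + E ∨ μ 2 0 4 = E + E ∨ μ 2 2 2 = E + E := by
        by_contra hcon
        push_neg at hcon
        rw [if_neg hcon.1, if_neg hcon.2.1, if_neg hcon.2.2.1, if_neg hcon.2.2.2] at h0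
        rw [← h0] at hpos
        norm_num at hpos
      rcases hdisj with h | h | h | h <;>
        · obtain ⟨e0, e1, e2⟩ := comp_of_eq h
          omega
    -- the key cancellation property holds for both max and min
    have hkeyA : ∀ a b : Fin 3 →₀ ℕ, a + b = A + A →
        (∃ i, coeff a (p i) ≠ 0) → (∃ j, coeff b (p j) ≠ 0) → a = A ∧ b = A := by
      intro a b hab ha hb
      have h1 := (φ_le_iff a A).1 (hAmax a ((hmemS a).2 ha))
      have h2 := (φ_le_iff b A).1 (hAmax b ((hmemS b).2 hb))
      have e0 := comp_of_add hab 0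
      have e1 := comp_of_add hab 1
      have e2 := comp_of_add hab 2
      simp only [Finsupp.add_apply] at e0 e1 e2
      constructor <;> (apply finsupp_eq_of_comps) <;> omega
    have hkeyB : ∀ a b : Fin 3 →₀ ℕ, a + b = B + B →
        (∃ i, coeff a (p i) ≠ 0) → (∃ j, coeff b (p j) ≠ 0) → a = B ∧ b = B := by
      intro a b hab ha hb
      have h1 := (φ_le_iff B a).1 (hBmin a ((hmemS a).2 ha))
      have h2 := (φ_le_iff B b).1 (hBmin b ((hmemS b).2 hb))
      have e0 := comp_of_add hab 0
      have e1 := comp_of_add hab 1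
      have e2 := comp_of_add hab 2
      simp only [Finsupp.add_apply] at e0 e1 e2
      constructor <;> (apply finsupp_eq_of_comps) <;> omega
    have HA := hdouble A hAS hkeyA
    have HB := hdouble B hBS hkeyB
    -- master support bound
    have hb7 : ∀ (a : Fin 3 →₀ ℕ) (i : Fin k), coeff a (p i) ≠ 0 →
        ((a 0 = 0 ∧ a 1 = 2 ∧ a 2 = 1) ∨ (a 0 = 0 ∧ a 1 = 3 ∧ a 2 = 0) ∨
         (a 0 = 1 ∧ a 1 = 0 ∧ a 2 = 2) ∨ (a 0 = 1 ∧ a 1 = 1 ∧ a 2 = 1) ∨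
         (a 0 = 1 ∧ a 1 = 2 ∧ a 2 = 0) ∨ (a 0 = 2 ∧ a 1 = 0 ∧ a 2 = 1) ∨
         (a 0 = 2 ∧ a 1 = 1 ∧ a 2 = 0)) := by
      intro a i ha
      have haS : a ∈ S := (hmemS a).2 ⟨i, ha⟩
      have h1 := (φ_le_iff a A).1 (hAmax a haS)
      have h2 := (φ_le_iff B a).1 (hBmin a haS)
      have hup : a 0 + a 1 + a 2 < 3 ∨
          (a 0 + a 1 + a 2 = 3 ∧ (a 0 < 2 ∨ (a 0 = 2 ∧ a 1 ≤ 1))) := by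
        rcases HA with ⟨u, v, w⟩ | ⟨u, v, w⟩ | ⟨u, v, w⟩ | ⟨u, v, w⟩ <;>
          rw [u, v, w] at h1 <;> omega
      have hlo : 3 < a 0 + a 1 + a 2 ∨
          (a 0 + a 1 + a 2 = 3 ∧ (0 < a 0 ∨ (0 = a 0 ∧ 2 ≤ a 1))) := by
        rcases HB with ⟨u, v, w⟩ | ⟨u, v, w⟩ | ⟨u, v, w⟩ | ⟨u, v, w⟩ <;>
          rw [u, v, w] at h2 <;> omega
      clear h1 h2 HA HB
      omega
    -- kill (0,3,0) using the coefficient of (0,6,0)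
    have hz030 : ∀ i, coeff (μ 0 3 0) (p i) = 0 := by
      have hs : ∀ i : Fin k, ∑ x ∈ Finset.HasAntidiagonal.antidiagonal (μ 0 6 0),
          coeff x.1 (p i) * coeff x.2 (p i) = coeff (μ 0 3 0) (p i) ^ 2 := by
        intro i
        refine sum_antidiag_eq_sq _ _ _ (by rw [μ_add]) ?_
        intro a b hab ha hb
        have Ha := hb7 a i ha
        have Hb := hb7 b i hb
        have e0 := comp_of_add hab 0
        have e1 := comp_of_add hab 1
        have e2 := comp_of_add hab 2
        simp only [μ_apply0, μ_apply1, μ_apply2] at e0 e1 e2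
        constructor <;> (rw [eq_μ_iff]) <;> omega
      have h0 := hco (μ 0 6 0)
      simp only [hs] at h0
      have hL : ((((if μ 4 2 0 = μ 0 6 0 then (1:ℝ) else 0) +
          if μ 0 4 2 = μ 0 6 0 then 1 else 0) + if μ 2 0 4 = μ 0 6 0 then 1 else 0) -
          if μ 2 2 2 = μ 0 6 0 then 3 else 0) = 0 := by norm_num
      rw [hL] at h0
      intro i
      have := (Finset.sum_eq_zero_iff_of_nonneg
        (fun j (_ : j ∈ Finset.univ) => sq_nonneg (coeff (μ 0 3 0) (p j)))).1 h0.symm i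
        (Finset.mem_univ i)
      exact pow_eq_zero_iff two_ne_zero |>.mp this
    -- kill (2,0,1) using the coefficient of (4,0,2)
    have hz201 : ∀ i, coeff (μ 2 0 1) (p i) = 0 := by
      have hs : ∀ i : Fin k, ∑ x ∈ Finset.HasAntidiagonal.antidiagonal (μ 4 0 2),
          coeff x.1 (p i) * coeff x.2 (p i) = coeff (μ 2 0 1) (p i) ^ 2 := by
        intro i
        refine sum_antidiag_eq_sq _ _ _ (by rw [μ_add]) ?_
        intro a b hab ha hb
        have Ha := hb7 a i ha
        have Hb := hb7 b i hb
        have e0 := comp_of_add hab 0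
        have e1 := comp_of_add hab 1
        have e2 := comp_of_add hab 2
        simp only [μ_apply0, μ_apply1, μ_apply2] at e0 e1 e2
        constructor <;> rw [eq_μ_iff] <;> omega
      have h0 := hco (μ 4 0 2)
      simp only [hs] at h0
      have hL : ((((if μ 4 2 0 = μ 4 0 2 then (1:ℝ) else 0) +
          if μ 0 4 2 = μ 4 0 2 then 1 else 0) + if μ 2 0 4 = μ 4 0 2 then 1 else 0) -
          if μ 2 2 2 = μ 4 0 2 then 3 else 0) = 0 := by norm_num
      rw [hL] at h0
      intro i
      have := (Finset.sum_eq_zero_iff_of_nonneg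
        (fun j (_ : j ∈ Finset.univ) => sq_nonneg (coeff (μ 2 0 1) (p j)))).1 h0.symm i
        (Finset.mem_univ i)
      exact pow_eq_zero_iff two_ne_zero |>.mp this
    -- kill (1,2,0) using the coefficient of (2,4,0)
    have hz120 : ∀ i, coeff (μ 1 2 0) (p i) = 0 := by
      have hs : ∀ i : Fin k, ∑ x ∈ Finset.HasAntidiagonal.antidiagonal (μ 2 4 0),
          coeff x.1 (p i) * coeff x.2 (p i) = coeff (μ 1 2 0) (p i) ^ 2 := by
        intro i
        refine sum_antidiag_eq_sq _ _ _ (by rw [μ_add]) ?_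
        intro a b hab ha hb
        have Ha := hb7 a i ha
        have Hb := hb7 b i hb
        have ha030 : ¬(a 0 = 0 ∧ a 1 = 3 ∧ a 2 = 0) := fun h =>
          ha (by rw [(eq_μ_iff a 0 3 0).2 h]; exact hz030 i)
        have hb030 : ¬(b 0 = 0 ∧ b 1 = 3 ∧ b 2 = 0) := fun h =>
          hb (by rw [(eq_μ_iff b 0 3 0).2 h]; exact hz030 i)
        have e0 := comp_of_add hab 0
        have e1 := comp_of_add hab 1
        have e2 := comp_of_add hab 2
        simp only [μ_apply0, μ_apply1, μ_apply2] at e0 e1 e2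
        constructor <;> rw [eq_μ_iff] <;> omega
      have h0 := hco (μ 2 4 0)
      simp only [hs] at h0
      have hL : ((((if μ 4 2 0 = μ 2 4 0 then (1:ℝ) else 0) +
          if μ 0 4 2 = μ 2 4 0 then 1 else 0) + if μ 2 0 4 = μ 2 4 0 then 1 else 0) -
          if μ 2 2 2 = μ 2 4 0 then 3 else 0) = 0 := by norm_num
      rw [hL] at h0
      intro i
      have := (Finset.sum_eq_zero_iff_of_nonneg
        (fun j (_ : j ∈ Finset.univ) => sq_nonneg (coeff (μ 1 2 0) (p j)))).1 h0.symm i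
        (Finset.mem_univ i)
      exact pow_eq_zero_iff two_ne_zero |>.mp this
    -- final contradiction via the coefficient of (2,2,2)
    have hs : ∀ i : Fin k, ∑ x ∈ Finset.HasAntidiagonal.antidiagonal (μ 2 2 2),
        coeff x.1 (p i) * coeff x.2 (p i) = coeff (μ 1 1 1) (p i) ^ 2 := by
      intro i
      refine sum_antidiag_eq_sq _ _ _ (by rw [μ_add]) ?_
      intro a b hab ha hb
      have Ha := hb7 a i ha
      have Hb := hb7 b i hb
      have ha201 : ¬(a 0 = 2 ∧ a 1 = 0 ∧ a 2 = 1) := fun h =>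
        ha (by rw [(eq_μ_iff a 2 0 1).2 h]; exact hz201 i)
      have hb201 : ¬(b 0 = 2 ∧ b 1 = 0 ∧ b 2 = 1) := fun h =>
        hb (by rw [(eq_μ_iff b 2 0 1).2 h]; exact hz201 i)
      have ha120 : ¬(a 0 = 1 ∧ a 1 = 2 ∧ a 2 = 0) := fun h =>
        ha (by rw [(eq_μ_iff a 1 2 0).2 h]; exact hz120 i)
      have hb120 : ¬(b 0 = 1 ∧ b 1 = 2 ∧ b 2 = 0) := fun h =>
        hb (by rw [(eq_μ_iff b 1 2 0).2 h]; exact hz120 i)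
      have e0 := comp_of_add hab 0
      have e1 := comp_of_add hab 1
      have e2 := comp_of_add hab 2
      simp only [μ_apply0, μ_apply1, μ_apply2] at e0 e1 e2
      constructor <;> rw [eq_μ_iff] <;> omega
    have h0 := hco (μ 2 2 2)
    simp only [hs] at h0
    have hneg : (-3:ℝ) = ∑ i, coeff (μ 1 1 1) (p i) ^ 2 := by
      rw [← h0]; norm_num
    have hnn : (0:ℝ) ≤ ∑ i, coeff (μ 1 1 1) (p i) ^ 2 :=
      Finset.sum_nonneg fun i _ => sq_nonneg _
    linarith
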